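/- There is an absolute constant C > 0 such that the following holds for all n ≥ 1, all real k > 0, and all ε ∈ (0,1] satisfying k·ε²/n ≤ 1. Let (X, A) be a pair of random variables on {0,1} × ℕ where X is uniform on {0,1}, the conditional distribution of A given X=0 is Poisson(k/n), and the conditional distribution of A given X=1 is the even mixture (1/2)·Poisson(k(1+ε)/n) + (1/2)·Poisson(k(1−ε)/n). Then I(X;A) ≤ C·k²·ε⁴/n². -/

import Mathlib

/-- The Poisson probability mass function with rate `lam`. -/
noncomputable def poissonPMF (lam : ℝ) (k : ℕ) : ℝ :=
  Real.exp (-lam) * lam ^ k / (Nat.factorial k)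

/-- Mutual information (in bits) of a joint distribution `mu` of a pair `(X, A)` with values
in `{0,1} × ℕ`; terms where the joint probability is `0` contribute `0`
(automatic since `0 * log 0 = 0`). -/
noncomputable def mutualInfoBoolNat (mu : Bool × ℕ → ℝ) : ℝ :=
  ∑' z : Bool × ℕ,
    mu z * Real.logb 2 (mu z / ((∑' a : ℕ, mu (z.1, a)) * (mu (false, z.2) + mu (true, z.2))))

/-- The joint distribution of `(X, A)` where `X` is uniform on `{0,1}`, `A | X=0` is
`Poisson(k/n)`, and `A | X=1` is the even mixture of `Poisson(k(1+ε)/n)` and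
`Poisson(k(1−ε)/n)`. -/
noncomputable def muEleven (n : ℕ) (k ε : ℝ) : Bool × ℕ → ℝ := fun z =>
  if z.1 then
    (1/2) * ((1/2) * poissonPMF (k * (1 + ε) / n) z.2
      + (1/2) * poissonPMF (k * (1 - ε) / n) z.2)
  else (1/2) * poissonPMF (k / n) z.2

lemma hasSum_expSeries (x : ℝ) : HasSum (fun a : ℕ => x ^ a / a.factorial) (Real.exp x) := by
  rw [Real.exp_eq_exp_ℝ]
  exact NormedSpace.expSeries_div_hasSum_exp x

lemma poissonPMF_nonneg {lam : ℝ} (h : 0 ≤ lam) (a : ℕ) : 0 ≤ poissonPMF lam a := by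
  unfold poissonPMF; positivity

lemma poissonPMF_pos {lam : ℝ} (h : 0 < lam) (a : ℕ) : 0 < poissonPMF lam a := by
  unfold poissonPMF; positivity

lemma hasSum_poissonPMF (lam : ℝ) : HasSum (poissonPMF lam) 1 := by
  have h := (hasSum_expSeries lam).mul_left (Real.exp (-lam))
  rw [← Real.exp_add, neg_add_cancel, Real.exp_zero] at h
  convert h using 2 with a
  · rfl
  unfold poissonPMF; ring

lemma hasSum_ratio {lam : ℝ} (hlam : 0 < lam) (μ ν : ℝ) :
    HasSum (fun a => poissonPMF μ a * poissonPMF ν a / poissonPMF lam a)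
      (Real.exp (lam - μ - ν + μ * ν / lam)) := by
  have h := (hasSum_expSeries (μ * ν / lam)).mul_left (Real.exp (lam - μ - ν))
  rw [← Real.exp_add] at h
  convert h using 2 with a
  · rfl
  unfold poissonPMF
  have h1 : Real.exp (-lam) ≠ 0 := Real.exp_ne_zero _
  have h2 : lam ^ a ≠ 0 := pow_ne_zero _ hlam.ne'
  have h3 : (a.factorial : ℝ) ≠ 0 := Nat.cast_ne_zero.2 a.factorial_ne_zero
  have he : Real.exp (lam - μ - ν) = Real.exp (-μ) * Real.exp (-ν) / Real.exp (-lam) := by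
    rw [← Real.exp_add, ← Real.exp_sub]; ring_nf
  rw [he, div_pow, mul_pow]
  field_simp

lemma key_ineq {p q : ℝ} (hp : 0 < p) (hq : 0 < q) :
    1/2 * (p * Real.logb 2 (p / ((p + q)/2))) + 1/2 * (q * Real.logb 2 (q / ((p + q)/2)))
      ≤ (p - q)^2 / (2 * p) / Real.log 2 := by
  have hlog2 : 0 < Real.log 2 := Real.log_pos one_lt_two
  have hpq : 0 < p + q := by linarith
  have hm : 0 < (p + q)/2 := by linarith
  have l1 : Real.log (p / ((p+q)/2)) ≤ p / ((p+q)/2) - 1 :=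
    Real.log_le_sub_one_of_pos (div_pos hp hm)
  have l2 : Real.log (q / ((p+q)/2)) ≤ q / ((p+q)/2) - 1 :=
    Real.log_le_sub_one_of_pos (div_pos hq hm)
  have key : 1/2 * (p * Real.log (p / ((p + q)/2))) + 1/2 * (q * Real.log (q / ((p + q)/2)))
      ≤ (p - q)^2 / (2 * p) := by
    have e : 1/2 * (p * (p / ((p+q)/2) - 1)) + 1/2 * (q * (q / ((p+q)/2) - 1))
        = (p - q)^2 / (2 * (p + q)) := by
      field_simp
      ring
    have step : 1/2 * (p * Real.log (p / ((p + q)/2))) + 1/2 * (q * Real.log (q / ((p + q)/2)))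
        ≤ (p - q)^2 / (2 * (p + q)) := by
      rw [← e]
      have := mul_le_mul_of_nonneg_left l1 hp.le
      have := mul_le_mul_of_nonneg_left l2 hq.le
      linarith
    exact step.trans (div_le_div_of_nonneg_left (by positivity) (by positivity) (by linarith))
  simp only [Real.logb]
  calc 1/2 * (p * (Real.log (p / ((p + q) / 2)) / Real.log 2)) +
        1/2 * (q * (Real.log (q / ((p + q) / 2)) / Real.log 2))
      = (1/2 * (p * Real.log (p / ((p + q)/2))) + 1/2 * (q * Real.log (q / ((p + q)/2)))) / Real.log 2 := by
        ring
    _ ≤ (p - q)^2 / (2 * p) / Real.log 2 := by gcongr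

lemma abs_term_le {x m : ℝ} (hx : 0 < x) (hm : 0 < m) (h2 : x ≤ 2*m) :
    |x * Real.logb 2 (x / m)| ≤ (x + m) / Real.log 2 := by
  have hlog2 : 0 < Real.log 2 := Real.log_pos one_lt_two
  have inner : |x * Real.log (x / m)| ≤ x + m := by
    have l1 : Real.log (x/m) ≤ x/m - 1 := Real.log_le_sub_one_of_pos (div_pos hx hm)
    have l2 : Real.log (m/x) ≤ m/x - 1 := Real.log_le_sub_one_of_pos (div_pos hm hx)
    have hxm : x / m ≤ 2 := by rw [div_le_iff₀ hm]; linarith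
    have hlogeq : Real.log (x/m) = - Real.log (m/x) := by
      rw [Real.log_div hx.ne' hm.ne', Real.log_div hm.ne' hx.ne']; ring
    rw [abs_le]
    constructor
    · have := mul_le_mul_of_nonneg_left l2 hx.le
      have hxmx : x * (m / x) = m := by field_simp
      rw [hlogeq]
      nlinarith
    · have := mul_le_mul_of_nonneg_left l1 hx.le
      nlinarith [mul_le_mul_of_nonneg_left hxm hx.le]
  calc |x * Real.logb 2 (x / m)| = |x * Real.log (x/m)| / Real.log 2 := by
        rw [Real.logb, ← mul_div_assoc, abs_div, abs_of_pos hlog2]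
    _ ≤ (x + m) / Real.log 2 := by gcongr

lemma cosh_bound {t : ℝ} (h0 : 0 ≤ t) (h1 : t ≤ 1) :
    Real.exp t + Real.exp (-t) - 2 ≤ (3/2) * t^2 := by
  have b1 := Real.exp_bound (x := t) (by rw [abs_of_nonneg h0]; exact h1) (n := 2) (by norm_num)
  have b2 := Real.exp_bound (x := -t) (by rw [abs_neg, abs_of_nonneg h0]; exact h1) (n := 2)
    (by norm_num)
  simp only [Finset.sum_range_succ, Finset.sum_range_zero, pow_zero, pow_one,
    Nat.factorial, abs_neg, abs_of_nonneg h0] at b1 b2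
  rw [abs_le] at b1 b2
  norm_num at b1 b2
  nlinarith [b1.2, b2.2]

set_option maxHeartbeats 1600000 in
theorem stmt11 : ∃ C : ℝ, 0 < C ∧
    ∀ (n : ℕ), 1 ≤ n → ∀ (k : ℝ), 0 < k → ∀ (ε : ℝ), ε ∈ Set.Ioc (0:ℝ) 1 →
      k * ε ^ 2 / n ≤ 1 →
      mutualInfoBoolNat (muEleven n k ε) ≤ C * k ^ 2 * ε ^ 4 / (n : ℝ) ^ 2 := by
  refine ⟨1, one_pos, ?_⟩
  intro n hn k hk ε hε hkε
  obtain ⟨hε0, hε1⟩ := hε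
  have hn0 : (0:ℝ) < n := by exact_mod_cast Nat.pos_of_ne_zero (by omega)
  have hlog2 : 0 < Real.log 2 := Real.log_pos one_lt_two
  set lam : ℝ := k / n with hlam_def
  have hlam : 0 < lam := div_pos hk hn0
  have hμ₁eq : k * (1 + ε) / n = lam * (1 + ε) := by rw [hlam_def]; ring
  have hμ₂eq : k * (1 - ε) / n = lam * (1 - ε) := by rw [hlam_def]; ring
  set t : ℝ := lam * ε^2 with ht_def
  have ht0 : 0 ≤ t := by positivity
  have ht1 : t ≤ 1 := by
    have : t = k * ε^2 / n := by rw [ht_def, hlam_def]; ring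
    linarith [this ▸ hkε]
  set p : ℕ → ℝ := poissonPMF lam with hp_def
  set A : ℕ → ℝ := poissonPMF (lam * (1 + ε)) with hA_def
  set B : ℕ → ℝ := poissonPMF (lam * (1 - ε)) with hB_def
  set q : ℕ → ℝ := fun a => 1/2 * A a + 1/2 * B a with hq_def
  have hppos : ∀ a, 0 < p a := poissonPMF_pos hlam
  have hApos : ∀ a, 0 < A a := poissonPMF_pos (by nlinarith)
  have hBnn : ∀ a, 0 ≤ B a := poissonPMF_nonneg (by nlinarith)
  have hqpos : ∀ a, 0 < q a := fun a => by
    have := hApos a; have := hBnn a; rw [hq_def]; dsimp only; linarith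
  have hsp : HasSum p 1 := hasSum_poissonPMF lam
  have hsA : HasSum A 1 := hasSum_poissonPMF _
  have hsB : HasSum B 1 := hasSum_poissonPMF _
  have hsq : HasSum q 1 := by
    have h := (hsA.mul_left (1/2)).add (hsB.mul_left (1/2))
    have e : (1/2 : ℝ) * 1 + 1/2 * 1 = 1 := by norm_num
    rw [e] at h
    exact h
  -- slice functions
  set f₀ : ℕ → ℝ := fun a => 1/2 * (p a * Real.logb 2 (p a / ((p a + q a)/2))) with hf₀
  set f₁ : ℕ → ℝ := fun a => 1/2 * (q a * Real.logb 2 (q a / ((p a + q a)/2))) with hf₁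
  -- identify the summand
  have hmufalse : ∀ a, muEleven n k ε (false, a) = 1/2 * p a := fun a => rfl
  have hmutrue : ∀ a, muEleven n k ε (true, a) = 1/2 * q a := by
    intro a
    show 1/2 * (1/2 * poissonPMF (k * (1+ε)/n) a + 1/2 * poissonPMF (k * (1-ε)/n) a) = _
    rw [hμ₁eq, hμ₂eq, hq_def]
  have hmargf : (∑' a : ℕ, muEleven n k ε (false, a)) = 1/2 := by
    simp only [hmufalse]
    rw [(hsp.mul_left (1/2)).tsum_eq]; norm_num
  have hmargt : (∑' a : ℕ, muEleven n k ε (true, a)) = 1/2 := by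
    simp only [hmutrue]
    rw [(hsq.mul_left (1/2)).tsum_eq]; norm_num
  set F : Bool × ℕ → ℝ := fun z =>
    muEleven n k ε z * Real.logb 2 (muEleven n k ε z /
      ((∑' a : ℕ, muEleven n k ε (z.1, a)) *
        (muEleven n k ε (false, z.2) + muEleven n k ε (true, z.2)))) with hF
  have hpq : ∀ a : ℕ, (0:ℝ) < p a + q a := fun a => by
    have := hppos a; have := hqpos a; linarith
  have hFfalse : ∀ a, F (false, a) = f₀ a := by
    intro a
    rw [hF]
    dsimp only
    rw [hmargf, hmufalse a, hmutrue a, hf₀]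
    have harg : (1/2 * p a) / (1/2 * (1/2 * p a + 1/2 * q a)) = p a / ((p a + q a)/2) := by
      rw [div_eq_div_iff (by have h1 := hppos a; have h2 := hqpos a; positivity)
        (by have h3 := hpq a; positivity)]
      ring
    rw [harg]
    ring
  have hFtrue : ∀ a, F (true, a) = f₁ a := by
    intro a
    rw [hF]
    dsimp only
    rw [hmargt, hmufalse a, hmutrue a, hf₁]
    have harg : (1/2 * q a) / (1/2 * (1/2 * p a + 1/2 * q a)) = q a / ((p a + q a)/2) := by
      rw [div_eq_div_iff (by have h1 := hppos a; have h2 := hqpos a; positivity)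
        (by have h3 := hpq a; positivity)]
      ring
    rw [harg]
    ring
  -- summability of the slices
  have test : (0:ℝ) < 1 := by linarith
  have hmm : ∀ a : ℕ, 0 < (p a + q a)/2 := fun a => half_pos (hpq a)
  have hple : ∀ a : ℕ, p a ≤ 2 * ((p a + q a)/2) := by
    intro a
    have h := hqpos a
    have e : 2 * ((p a + q a)/2) = p a + q a := by ring
    rw [e]
    linarith
  have hqle : ∀ a : ℕ, q a ≤ 2 * ((p a + q a)/2) := by
    intro a
    have h := hppos a
    have e : 2 * ((p a + q a)/2) = p a + q a := by ring
    rw [e]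
    linarith
  have hbound : Summable (fun a => 1/2 * ((p a + (p a + q a)/2) / Real.log 2)) :=
    (((hsp.summable.add ((hsp.summable.add hsq.summable).div_const 2)).div_const
      (Real.log 2)).mul_left (1/2))
  have hbound' : Summable (fun a => 1/2 * ((q a + (p a + q a)/2) / Real.log 2)) :=
    (((hsq.summable.add ((hsp.summable.add hsq.summable).div_const 2)).div_const
      (Real.log 2)).mul_left (1/2))
  have habs₀ : ∀ a, |f₀ a| ≤ 1/2 * ((p a + (p a + q a)/2) / Real.log 2) := by
    intro a
    rw [hf₀]
    dsimp only
    rw [abs_mul, abs_of_nonneg (by norm_num : (0:ℝ) ≤ 1/2)]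
    exact mul_le_mul_of_nonneg_left (abs_term_le (hppos a) (hmm a) (hple a)) (by norm_num)
  have habs₁ : ∀ a, |f₁ a| ≤ 1/2 * ((q a + (p a + q a)/2) / Real.log 2) := by
    intro a
    rw [hf₁]
    dsimp only
    rw [abs_mul, abs_of_nonneg (by norm_num : (0:ℝ) ≤ 1/2)]
    exact mul_le_mul_of_nonneg_left (abs_term_le (hqpos a) (hmm a) (hqle a)) (by norm_num)
  have hsf₀ : Summable f₀ := summable_abs_iff.mp
    (Summable.of_nonneg_of_le (fun a => abs_nonneg _) habs₀ hbound)
  have hsf₁ : Summable f₁ := summable_abs_iff.mp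
    (Summable.of_nonneg_of_le (fun a => abs_nonneg _) habs₁ hbound')
  have hFabs : Summable (fun z => |F z|) := by
    rw [summable_prod_of_nonneg (fun z => abs_nonneg (F z))]
    refine ⟨?_, Summable.of_finite⟩
    intro b
    cases b
    · simp only [hFfalse]
      exact hsf₀.abs
    · simp only [hFtrue]
      exact hsf₁.abs
  have hFs : Summable F := summable_abs_iff.mp hFabs
  -- rewrite the mutual information
  have hsplit : mutualInfoBoolNat (muEleven n k ε) = (∑' a, f₀ a) + (∑' a, f₁ a) := by
    rw [mutualInfoBoolNat, ← hF]
    calc (∑' z : Bool × ℕ, F z) = ∑' (b : Bool) (a : ℕ), F (b, a) := hFs.tsum_prod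
      _ = (∑' a, F (false, a)) + (∑' a, F (true, a)) :=
          tsum_bool (fun b => ∑' a, F (b, a))
      _ = (∑' a, f₀ a) + (∑' a, f₁ a) := by simp only [hFfalse, hFtrue]
  -- the chi-square computation
  have hR11 : HasSum (fun a => A a * A a / p a) (Real.exp t) := by
    have h := hasSum_ratio hlam (lam*(1+ε)) (lam*(1+ε))
    have e : lam - lam*(1+ε) - lam*(1+ε) + lam*(1+ε)*(lam*(1+ε))/lam = t := by
      rw [ht_def]; field_simp; ring
    rw [e] at h
    exact h
  have hR22 : HasSum (fun a => B a * B a / p a) (Real.exp t) := by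
    have h := hasSum_ratio hlam (lam*(1-ε)) (lam*(1-ε))
    have e : lam - lam*(1-ε) - lam*(1-ε) + lam*(1-ε)*(lam*(1-ε))/lam = t := by
      rw [ht_def]; field_simp; ring
    rw [e] at h
    exact h
  have hR12 : HasSum (fun a => A a * B a / p a) (Real.exp (-t)) := by
    have h := hasSum_ratio hlam (lam*(1+ε)) (lam*(1-ε))
    have e : lam - lam*(1+ε) - lam*(1-ε) + lam*(1+ε)*(lam*(1-ε))/lam = -t := by
      rw [ht_def]; field_simp; ring
    rw [e] at h
    exact h
  have hgsum : HasSum (fun a => (p a - q a)^2/(2*p a))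
      ((Real.exp t + Real.exp (-t) - 2)/4) := by
    have comb := ((hsp.mul_left (1/2)).sub hsq).add
      (((hR11.mul_left (1/8)).add (hR22.mul_left (1/8))).add (hR12.mul_left (1/4)))
    have hval : (1/2*(1:ℝ) - 1) + ((1/8*Real.exp t + 1/8*Real.exp t) + 1/4*Real.exp (-t))
        = (Real.exp t + Real.exp (-t) - 2)/4 := by ring
    rw [hval] at comb
    convert comb using 1
    · rfl
    funext a
    have hq' : q a = 1/2 * A a + 1/2 * B a := rfl
    rw [hq']
    field_simp [(hppos a).ne']
    ring
  have hg : HasSum (fun a => (p a - q a)^2/(2*p a)/Real.log 2)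
      ((Real.exp t + Real.exp (-t) - 2)/4/Real.log 2) := hgsum.div_const _
  -- final estimate
  have hfinal : (Real.exp t + Real.exp (-t) - 2)/4/Real.log 2 ≤ 1 * k^2 * ε^4 / (n:ℝ)^2 := by
    have hc := cosh_bound ht0 ht1
    have hl2 : (0.6931471803 : ℝ) < Real.log 2 := Real.log_two_gt_d9
    have h3 : t^2 = k^2*ε^4/(n:ℝ)^2 := by
      rw [ht_def, hlam_def]
      field_simp
    have h1 : (Real.exp t + Real.exp (-t) - 2)/4/Real.log 2 ≤ (3/2*t^2)/4/Real.log 2 := by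
      gcongr
    have h2 : (3/2*t^2)/4/Real.log 2 ≤ t^2 := by
      rw [div_div, div_le_iff₀ (by positivity)]
      nlinarith [sq_nonneg t]
    calc (Real.exp t + Real.exp (-t) - 2)/4/Real.log 2 ≤ t^2 := h1.trans h2
      _ = k^2*ε^4/(n:ℝ)^2 := h3
      _ = 1 * k^2 * ε^4 / (n:ℝ)^2 := by ring
  calc mutualInfoBoolNat (muEleven n k ε) = (∑' a, f₀ a) + (∑' a, f₁ a) := hsplit
    _ = ∑' a, (f₀ a + f₁ a) := (hsf₀.tsum_add hsf₁).symm
    _ ≤ ∑' a, (p a - q a)^2/(2*p a)/Real.log 2 := by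
        refine Summable.tsum_le_tsum ?_ (hsf₀.add hsf₁) hg.summable
        intro a
        exact key_ineq (hppos a) (hqpos a)
    _ = (Real.exp t + Real.exp (-t) - 2)/4/Real.log 2 := hg.tsum_eq
    _ ≤ 1 * k^2 * ε^4 / (n:ℝ)^2 := hfinal
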